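/- Let K be a p-core CRG for some p ∈ (0,1/2], with fully supported optimizer μ. Then for every vertex u of K, the weighted gray-degree satisfies d_G(u) ≤ 1 − μ(u), where d_G(u) = Σ_{v: uv gray} μ(v). Consequently, for a black vertex u (using the identity d_G(u) = (p − g)/p + ((1−2p)/p)μ(u) with g = g_K(p)), one obtains μ(u) ≤ g/(1−p). -/
import Mathlib


open Finset

inductive EColor | white | black | gray
deriving DecidableEq

/-- The `p`-weight of an edge color: `p` for white, `1-p` for black, `0` for gray. -/
def wval (p : ℝ) : EColor → ℝ
  | .white => p
  | .black => 1 - p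
  | .gray => 0

/-- The matrix `M_K(p)` of a CRG given by vertex colors `vb` (`true` = black)
and edge colors `ec`. -/
def Mmat {V : Type*} [DecidableEq V] (vb : V → Bool) (ec : V → V → EColor) (p : ℝ)
    (x y : V) : ℝ :=
  if x = y then (if vb x then 1 - p else p) else wval p (ec x y)

/-- `μ` is a probability mass. -/
def IsProb {V : Type*} [Fintype V] (μ : V → ℝ) : Prop :=
  (∀ x, 0 ≤ μ x) ∧ ∑ x, μ x = 1

/-- The quadratic form `⟨μ, M_K(p) μ⟩`. -/
def QF {V : Type*} [Fintype V] [DecidableEq V] (vb : V → Bool) (ec : V → V → EColor)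
    (p : ℝ) (μ : V → ℝ) : ℝ :=
  ∑ x, ∑ y, μ x * Mmat vb ec p x y * μ y

/-- `g` is the minimum of the quadratic form over probability masses, i.e. `g = g_K(p)`. -/
def gIs {V : Type*} [Fintype V] [DecidableEq V] (vb : V → Bool) (ec : V → V → EColor)
    (p g : ℝ) : Prop :=
  IsLeast {t | ∃ μ : V → ℝ, IsProb μ ∧ t = QF vb ec p μ} g

/-- The weighted gray-degree `d_G(u) = ∑_{v : uv gray} μ(v)`. -/
def grayDeg {V : Type*} [Fintype V] [DecidableEq V] (ec : V → V → EColor) (μ : V → ℝ)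
    (u : V) : ℝ :=
  ∑ v ∈ Finset.univ.filter (fun v => v ≠ u ∧ ec u v = EColor.gray), μ v

/-- for `p ∈ (0,1/2]` and a `p`-core CRG with fully supported optimizer `μ`,
every vertex `u` satisfies `d_G(u) ≤ 1 − μ(u)`; consequently every black vertex `u`
(satisfying the gray-degree identity) has `μ(u) ≤ g/(1−p)`. -/
theorem stmt19 {V : Type*} [Fintype V] [DecidableEq V]
    (vb : V → Bool) (ec : V → V → EColor) (p g : ℝ) (hp0 : 0 < p) (hp2 : p ≤ 1 / 2)
    (hsymm : ∀ a b, ec a b = ec b a)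
    (hnb : ∀ x y, x ≠ y → ec x y ≠ EColor.black)
    (hwe : ∀ x y, x ≠ y → ec x y = EColor.white → vb x = true ∧ vb y = true)
    (μ : V → ℝ) (hμ : IsProb μ) (hfull : ∀ x, 0 < μ x)
    (hg : gIs vb ec p g) (hμg : QF vb ec p μ = g)
    (hblack : ∀ u, vb u = true →
      grayDeg ec μ u = (p - g) / p + ((1 - 2 * p) / p) * μ u) :
    (∀ u, grayDeg ec μ u ≤ 1 - μ u) ∧
    (∀ u, vb u = true → μ u ≤ g / (1 - p)) := by
  have key : ∀ u, grayDeg ec μ u ≤ 1 - μ u := by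
    intro u
    have h1 : grayDeg ec μ u ≤ ∑ v ∈ Finset.univ.erase u, μ v := by
      apply Finset.sum_le_sum_of_subset_of_nonneg
      · intro v hv
        simp only [Finset.mem_filter, Finset.mem_univ, true_and] at hv
        exact Finset.mem_erase.mpr ⟨hv.1, Finset.mem_univ v⟩
      · intro v _ _; exact (hfull v).le
    have h2 : μ u + ∑ v ∈ Finset.univ.erase u, μ v = 1 := by
      rw [Finset.add_sum_erase _ _ (Finset.mem_univ u)]; exact hμ.2
    linarith
  refine ⟨key, fun u hu => ?_⟩
  have hle := key u
  rw [hblack u hu] at hle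
  have hp1 : (0:ℝ) < 1 - p := by linarith
  rw [le_div_iff₀ hp1]
  have h := mul_le_mul_of_nonneg_left hle hp0.le
  field_simp at h
  nlinarith [h]
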